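/- arXiv:2304.03825 — 6 statements merged into one kernel-verified Lean document; each statement's English description precedes it below -/
import Mathlib

section
/- If G is a finite r-regular graph with chromatic number 3, then G has at least ⌈3r/2⌉ vertices, i.e., |V(G)| ≥ r + ⌈r/2⌉. -/
/-- If G is a finite r-regular graph with chromatic number 3, then
|V(G)| ≥ r + ⌈r/2⌉ = ⌈3r/2⌉. -/
theorem stmt0 {V : Type*} [Fintype V] (G : SimpleGraph V) [DecidableRel G.Adj]
    (r : ℕ) (hr : 2 ≤ r) (hreg : G.IsRegularOfDegree r)
    (hchi : G.chromaticNumber = 3) :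
    r + (r + 1) / 2 ≤ Fintype.card V := by
  classical
  have hcol : G.Colorable 3 := by
    rw [← SimpleGraph.chromaticNumber_le_iff_colorable, hchi]; norm_num
  obtain ⟨C⟩ := hcol
  -- C is surjective
  have hsurj : Function.Surjective C := by
    intro i
    by_contra h
    push_neg at h
    have h2 : G.Colorable 2 := by
      have C' : G.Coloring {j : Fin 3 // j ≠ i} :=
        SimpleGraph.Coloring.mk (fun v => ⟨C v, h v⟩)
          (fun hadj => by simpa using C.valid hadj)
      have := C'.colorable
      rwa [show Fintype.card {j : Fin 3 // j ≠ i} = 2 by simp] at this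
    have := SimpleGraph.chromaticNumber_le_iff_colorable.mpr h2
    rw [hchi] at this
    norm_num at this
  set s : Fin 3 → ℕ := fun i => (Finset.univ.filter (fun v => C v = i)).card with hs
  have hsum : ∑ i, s i = Fintype.card V := by
    rw [hs]
    rw [← Finset.card_univ]
    exact (Finset.card_eq_sum_card_fiberwise (fun v _ => Finset.mem_univ (C v))).symm
  have hkey : ∀ i, r + s i ≤ Fintype.card V := by
    intro i
    obtain ⟨v, hv⟩ := hsurj i
    have hsub : G.neighborFinset v ⊆ Finset.univ.filter (fun u => C u ≠ i) := by
      intro u hu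
      rw [SimpleGraph.mem_neighborFinset] at hu
      simp only [Finset.mem_filter, Finset.mem_univ, true_and]
      intro hc
      exact C.valid hu.symm (by rw [hc, hv])
    have h1 : r ≤ (Finset.univ.filter (fun u => C u ≠ i)).card := by
      have := Finset.card_le_card hsub
      rwa [SimpleGraph.card_neighborFinset_eq_degree, hreg v] at this
    have h2 : (Finset.univ.filter (fun u => C u ≠ i)).card + s i = Fintype.card V := by
      rw [hs, ← Finset.card_univ, add_comm]
      exact Finset.card_filter_add_card_filter_not (p := fun u => C u = i)
    omega
  have h0 := hkey 0
  have h1 := hkey 1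
  have h2 := hkey 2
  have : ∑ i, s i = s 0 + s 1 + s 2 := by
    simp [Fin.sum_univ_three]
  omega
end

section
/- For even r ≥ 2, the minimum order of an r-regular graph with girth 3 and chromatic number 3 is exactly 3r/2. -/
open SimpleGraph Finset

private def triG (k : ℕ) : SimpleGraph (Fin (3 * k)) where
  Adj v w := (v : ℕ) / k ≠ (w : ℕ) / k
  symm := ⟨fun _ _ h => Ne.symm h⟩
  loopless := ⟨fun _ h => h rfl⟩

private instance triGDec (k : ℕ) : DecidableRel (triG k).Adj :=
  fun v w => inferInstanceAs (Decidable ((v : ℕ) / k ≠ (w : ℕ) / k))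

private lemma block_card (k : ℕ) (hk : 0 < k) (i : ℕ) (hi : i < 3) :
    (Finset.univ.filter (fun w : Fin (3 * k) => (w : ℕ) / k = i)).card = k := by
  have h : (Finset.univ.filter (fun w : Fin (3 * k) => (w : ℕ) / k = i)).card =
      (Finset.range k).card := by
    apply Finset.card_bij'
      (s := Finset.univ.filter (fun w : Fin (3 * k) => (w : ℕ) / k = i))
      (t := Finset.range k)
      (fun w _ => (w : ℕ) % k)
      (fun x _ => (⟨i * k + x % k, by
        have : x % k < k := Nat.mod_lt _ hk
        nlinarith⟩ : Fin (3 * k)))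
    case hi =>
      intro a _
      exact Finset.mem_range.mpr (Nat.mod_lt _ hk)
    case hj =>
      intro x hx
      simp only [Finset.mem_filter, Finset.mem_univ, true_and]
      have hxk : x % k < k := Nat.mod_lt _ hk
      show (i * k + x % k) / k = i
      rw [Nat.mul_comm, Nat.mul_add_div hk, Nat.div_eq_of_lt hxk]
      omega
    case left_inv =>
      intro a ha
      simp only [Finset.mem_filter, Finset.mem_univ, true_and] at ha
      apply Fin.ext
      simp only
      rw [Nat.mod_mod_of_dvd _ dvd_rfl, ← ha]
      exact Nat.div_add_mod' _ _
    case right_inv =>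
      intro x hx
      simp only
      have hxk : x < k := Finset.mem_range.mp hx
      rw [Nat.mul_comm i k, Nat.mul_add_mod, Nat.mod_mod_of_dvd _ dvd_rfl,
        Nat.mod_eq_of_lt hxk]
  simpa using h

private lemma girth_eq_three_of_triangle {α : Type*} {G : SimpleGraph α} {a b c : α}
    (hab : G.Adj a b) (hbc : G.Adj b c) (hca : G.Adj c a) : G.girth = 3 := by
  classical
  set w : G.Walk a a := Walk.cons hab (Walk.cons hbc (Walk.cons hca Walk.nil)) with hw
  have hne : a ≠ b := hab.ne
  have hne2 : b ≠ c := hbc.ne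
  have hne3 : c ≠ a := hca.ne
  have hcyc : w.IsCycle := by
    rw [hw, Walk.cons_isCycle_iff]
    constructor
    · rw [Walk.isPath_def]
      simp [hne2, hne3, Ne.symm hne3, hne, Ne.symm hne]
    · simp only [Walk.edges_cons, Walk.edges_nil, List.mem_cons, List.not_mem_nil, or_false]
      intro h
      rcases h with h | h
      · rw [Sym2.eq_iff] at h
        rcases h with ⟨h1, h2⟩ | ⟨h1, h2⟩ <;> simp_all
      · rw [Sym2.eq_iff] at h
        rcases h with ⟨h1, h2⟩ | ⟨h1, h2⟩ <;> simp_all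
  have hle : G.egirth ≤ 3 := by
    have : G.egirth ≤ (w.length : ℕ∞) :=
      le_trans (iInf_le _ a) (le_trans (iInf_le _ w) (iInf_le _ hcyc))
    simpa [hw] using this
  have hge : 3 ≤ G.egirth := SimpleGraph.three_le_egirth
  have heg : G.egirth = 3 := le_antisymm hle hge
  rw [SimpleGraph.girth, heg]
  rfl

/-- For even r ≥ 2, the minimum order of an r-regular graph with girth 3 and
chromatic number 3 is exactly 3r/2. -/
theorem stmt3 (r : ℕ) (hr : 2 ≤ r) (hre : Even r) :
    IsLeast {n | ∃ (G : SimpleGraph (Fin n)) (_ : DecidableRel G.Adj),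
      G.IsRegularOfDegree r ∧ G.girth = 3 ∧ G.chromaticNumber = 3}
      (3 * r / 2) := by
  obtain ⟨k, hk⟩ := hre
  have hrk : r = 2 * k := by omega
  have hk1 : 1 ≤ k := by omega
  have hk0 : 0 < k := hk1
  have hn : 3 * r / 2 = 3 * k := by omega
  have h0k : 0 / k = 0 := Nat.zero_div k
  have hkk : k / k = 1 := Nat.div_self hk0
  have h2k : 2 * k / k = 2 := by rw [Nat.mul_comm]; exact Nat.mul_div_cancel_left 2 hk0
  constructor
  · -- membership
    rw [hn]
    refine ⟨triG k, triGDec k, ?_, ?_, ?_⟩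
    · -- regular of degree r
      intro v
      have hv3 : (v : ℕ) / k < 3 := Nat.div_lt_of_lt_mul (by omega)
      rw [SimpleGraph.degree, SimpleGraph.neighborFinset_eq_filter]
      have hb := block_card k hk0 ((v : ℕ) / k) hv3
      have huniv : (Finset.univ : Finset (Fin (3 * k))).card = 3 * k := by simp
      have hfe : (Finset.univ.filter ((triG k).Adj v)) =
          (Finset.univ.filter (fun w : Fin (3 * k) => ¬ (w : ℕ) / k = (v : ℕ) / k)) := by
        ext w
        simp only [Finset.mem_filter, Finset.mem_univ, true_and]
        exact ⟨fun h he => h he.symm, fun h he => h he.symm⟩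
      have hcard : (Finset.univ.filter
          (fun w : Fin (3 * k) => ¬ (w : ℕ) / k = (v : ℕ) / k)).card = 3 * k - k := by
        rw [Finset.filter_not, Finset.card_sdiff_of_subset (Finset.filter_subset _ _), hb, huniv]
      rw [hfe, hcard]
      omega
    · -- girth
      exact girth_eq_three_of_triangle
        (a := (⟨0, by omega⟩ : Fin (3 * k))) (b := ⟨k, by omega⟩) (c := ⟨2 * k, by omega⟩)
        (show (0 : ℕ) / k ≠ (k : ℕ) / k by omega)
        (show (k : ℕ) / k ≠ (2 * k) / k by omega)
        (show (2 * k : ℕ) / k ≠ (0 : ℕ) / k by omega)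
    · -- chromatic number
      have C : (triG k).Coloring (Fin 3) :=
        SimpleGraph.Coloring.mk
          (fun v => ⟨(v : ℕ) / k, Nat.div_lt_of_lt_mul (by omega)⟩)
          (by
            intro v w hvw
            exact fun he => hvw (congrArg Fin.val he))
      have hcol3 : (triG k).Colorable 3 := by
        simpa using C.colorable
      have hle : (triG k).chromaticNumber ≤ 3 := by
        simpa using hcol3.chromaticNumber_le
      have htri : (triG k).Adj ⟨0, by omega⟩ ⟨k, by omega⟩ ∧
          (triG k).Adj (⟨0, by omega⟩ : Fin (3 * k)) ⟨2 * k, by omega⟩ ∧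
          (triG k).Adj (⟨k, by omega⟩ : Fin (3 * k)) ⟨2 * k, by omega⟩ :=
        ⟨show (0 : ℕ) / k ≠ (k : ℕ) / k by omega,
         show (0 : ℕ) / k ≠ (2 * k : ℕ) / k by omega,
         show (k : ℕ) / k ≠ (2 * k : ℕ) / k by omega⟩
      have hnc2 : ¬ (triG k).Colorable 2 := by
        intro h2
        have hcf : (triG k).CliqueFree 3 := h2.cliqueFree (by norm_num)
        exact hcf _ (SimpleGraph.is3Clique_triple_iff.mpr htri)
      have hge : 3 ≤ (triG k).chromaticNumber := by
        by_contra hlt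
        push_neg at hlt
        have h2 : (triG k).chromaticNumber ≤ 2 :=
          Order.le_of_lt_add_one (by norm_num at hlt ⊢; exact hlt)
        exact hnc2 (SimpleGraph.chromaticNumber_le_iff_colorable.mp h2)
      exact le_antisymm hle hge
  · -- lower bound
    rintro n ⟨G, inst, hreg, hgirth, hchrom⟩
    have hn0 : 0 < n := by
      by_contra h
      push_neg at h
      interval_cases n
      have : G.chromaticNumber = 0 := G.chromaticNumber_eq_zero_of_isEmpty
      rw [hchrom] at this
      exact absurd this (by norm_num)
    have hcol : G.Colorable 3 :=
      SimpleGraph.chromaticNumber_le_iff_colorable.mp (le_of_eq hchrom)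
    obtain ⟨C⟩ := hcol
    classical
    have hsum : (Finset.univ : Finset (Fin n)).card =
        ∑ i : Fin 3, ((Finset.univ : Finset (Fin n)).filter (fun v => C v = i)).card :=
      Finset.card_eq_sum_card_fiberwise (fun x _ => Finset.mem_univ (C x))
    have hclass : ∀ i : Fin 3,
        ((Finset.univ : Finset (Fin n)).filter (fun v => C v = i)).card + r ≤ n := by
      intro i
      by_cases hne : ((Finset.univ : Finset (Fin n)).filter (fun v => C v = i)).Nonempty
      · obtain ⟨v, hv⟩ := hne
        have hvc : C v = i := (Finset.mem_filter.mp hv).2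
        have hdisj : Disjoint ((Finset.univ : Finset (Fin n)).filter (fun v => C v = i))
            (G.neighborFinset v) := by
          rw [Finset.disjoint_left]
          intro u hu hu'
          have h1 : C u = i := (Finset.mem_filter.mp hu).2
          have h2 : G.Adj v u := (SimpleGraph.mem_neighborFinset _ _ _).mp hu'
          exact C.valid h2 (by rw [hvc, h1])
        have hcu := Finset.card_union_of_disjoint hdisj
        have hle : (((Finset.univ : Finset (Fin n)).filter (fun v => C v = i)) ∪
            G.neighborFinset v).card ≤ n := by
          have := Finset.card_le_univ (((Finset.univ : Finset (Fin n)).filter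
            (fun v => C v = i)) ∪ G.neighborFinset v)
          simpa using this
        rw [hcu] at hle
        have hdeg : (G.neighborFinset v).card = r := hreg v
        rw [hdeg] at hle
        exact hle
      · rw [Finset.not_nonempty_iff_eq_empty] at hne
        rw [hne]
        simp only [Finset.card_empty, Nat.zero_add]
        have := G.degree_lt_card_verts ⟨0, hn0⟩
        rw [hreg ⟨0, hn0⟩] at this
        simpa using le_of_lt this
    have h0 := hclass 0
    have h1 := hclass 1
    have h2 := hclass 2
    have hsum' : n = ∑ i : Fin 3, ((Finset.univ : Finset (Fin n)).filter
        (fun v => C v = i)).card := by simpa using hsum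
    rw [Fin.sum_univ_three] at hsum'
    omega
end

section
/- Let r ≥ 3 be odd with ⌈r/2⌉ odd. There is no r-regular graph G of order r + ⌈r/2⌉ with chromatic number 3. More precisely, if such G had a proper 3-coloring with classes A, B, C where |A| = |B| = ⌈r/2⌉ and |C| = ⌊r/2⌋, then every vertex of C would have degree r + 1, a contradiction. -/
/-- For odd r ≥ 3 with ⌈r/2⌉ odd, there is no r-regular graph of order
r + ⌈r/2⌉ with chromatic number 3. -/
theorem stmt5 (r : ℕ) (hr : 3 ≤ r) (hodd : Odd r) (hceil : Odd ((r + 1) / 2)) :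
    ¬ ∃ (G : SimpleGraph (Fin (r + (r + 1) / 2))) (_ : DecidableRel G.Adj),
      G.IsRegularOfDegree r ∧ G.chromaticNumber = 3 := by
  rintro ⟨G, hdec, hreg, hchrom⟩
  obtain ⟨m, hm⟩ := hodd
  have hk : (r + 1) / 2 = m + 1 := by omega
  have hcol : G.Colorable 3 := by
    rw [← SimpleGraph.chromaticNumber_le_iff_colorable, hchrom]; exact_mod_cast le_refl _
  obtain ⟨C⟩ := hcol
  classical
  let cls : Fin 3 → Finset (Fin (r + (r + 1) / 2)) :=
    fun i => Finset.univ.filter (fun v => C v = i)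
  have hmemcls : ∀ (i : Fin 3) (v), v ∈ cls i ↔ C v = i := by
    intro i v; simp [cls]
  have hsum : (cls 0).card + (cls 1).card + (cls 2).card = r + (r + 1) / 2 := by
    have := Finset.card_eq_sum_card_fiberwise
      (f := C) (s := (Finset.univ : Finset (Fin (r + (r + 1) / 2)))) (t := Finset.univ)
      (fun x _ => Finset.mem_univ (C x))
    simp only [Finset.card_univ, Fintype.card_fin, Fin.sum_univ_three] at this
    exact this.symm
  have hnbr : ∀ v, G.neighborFinset v ⊆
      Finset.univ.filter (fun w => ¬ C w = C v) := by
    intro v w hw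
    rw [SimpleGraph.mem_neighborFinset] at hw
    simp only [Finset.mem_filter, Finset.mem_univ, true_and]
    exact fun h => C.valid hw h.symm
  have hcardfilter : ∀ i : Fin 3,
      (Finset.univ.filter (fun w : Fin (r + (r + 1) / 2) => ¬ C w = i)).card
        = r + (r + 1) / 2 - (cls i).card := by
    intro i
    have h := Finset.card_filter_add_card_filter_not
      (s := (Finset.univ : Finset (Fin (r + (r + 1) / 2)))) (p := fun w => C w = i)
    simp only [Finset.card_univ, Fintype.card_fin] at h
    have : (cls i).card = (Finset.univ.filter (fun w : Fin (r + (r + 1) / 2) => C w = i)).card := rfl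
    omega
  have hle : ∀ i : Fin 3, (cls i).card ≤ (r + 1) / 2 := by
    intro i
    rcases (cls i).eq_empty_or_nonempty with he | ⟨v, hv⟩
    · rw [he]; simp
    · have hv' : C v = i := (hmemcls i v).mp hv
      have h1 : G.degree v ≤
          (Finset.univ.filter (fun w : Fin (r + (r + 1) / 2) => ¬ C w = i)).card := by
        rw [SimpleGraph.degree]
        refine Finset.card_le_card ?_
        rw [← hv']; exact hnbr v
      rw [hreg v, hcardfilter i] at h1
      omega
  have key : ∀ i j : Fin 3, i ≠ j →
      (cls i).card = (r + 1) / 2 → (cls j).card = (r + 1) / 2 → False := by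
    intro i j hij hci hcj
    have hfull : ∀ l : Fin 3, (cls l).card = (r + 1) / 2 → ∀ u ∈ cls l,
        ∀ w, ¬ C w = l → G.Adj u w := by
      intro l hcl u hu w hw
      have hu' : C u = l := (hmemcls l u).mp hu
      have hsub : G.neighborFinset u ⊆
          Finset.univ.filter (fun w : Fin (r + (r + 1) / 2) => ¬ C w = l) := by
        rw [← hu']; exact hnbr u
      have hdeg : (G.neighborFinset u).card = r := hreg u
      have hcards : (Finset.univ.filter
          (fun w : Fin (r + (r + 1) / 2) => ¬ C w = l)).card ≤
          (G.neighborFinset u).card := by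
        rw [hcardfilter l, hcl, hdeg]; omega
      have heq := Finset.eq_of_subset_of_card_le hsub hcards
      have hwmem : w ∈ G.neighborFinset u := by
        rw [heq]; simp [hw]
      rwa [SimpleGraph.mem_neighborFinset] at hwmem
    have hdisj : Disjoint (cls i) (cls j) := by
      apply Finset.disjoint_left.mpr
      intro a ha haj
      exact hij (((hmemcls i a).mp ha).symm.trans ((hmemcls j a).mp haj))
    have hunion : ((cls i) ∪ (cls j)).card = 2 * ((r + 1) / 2) := by
      rw [Finset.card_union_of_disjoint hdisj, hci, hcj]; omega
    have hvex : ∃ v, v ∉ (cls i) ∪ (cls j) := by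
      by_contra h
      push_neg at h
      have hle2 : (Finset.univ : Finset (Fin (r + (r + 1) / 2))).card ≤
          ((cls i) ∪ (cls j)).card :=
        Finset.card_le_card (fun x _ => h x)
      simp only [Finset.card_univ, Fintype.card_fin] at hle2
      omega
    obtain ⟨v, hv⟩ := hvex
    rw [Finset.mem_union, not_or] at hv
    have hvi : ¬ C v = i := fun h => hv.1 ((hmemcls i v).mpr h)
    have hvj : ¬ C v = j := fun h => hv.2 ((hmemcls j v).mpr h)
    have hsubnbr : (cls i) ∪ (cls j) ⊆ G.neighborFinset v := by
      intro u hu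
      rw [SimpleGraph.mem_neighborFinset]
      rcases Finset.mem_union.mp hu with h | h
      · exact (hfull i hci u h v hvi).symm
      · exact (hfull j hcj u h v hvj).symm
    have hfin := Finset.card_le_card hsubnbr
    have hdeg : (G.neighborFinset v).card = r := hreg v
    rw [hunion, hdeg] at hfin
    omega
  have h0 := hle 0
  have h1 := hle 1
  have h2 := hle 2
  have htwo : ((cls 0).card = (r + 1) / 2 ∧ (cls 1).card = (r + 1) / 2) ∨
      ((cls 0).card = (r + 1) / 2 ∧ (cls 2).card = (r + 1) / 2) ∨
      ((cls 1).card = (r + 1) / 2 ∧ (cls 2).card = (r + 1) / 2) := by omega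
  rcases htwo with ⟨ha, hb⟩ | ⟨ha, hb⟩ | ⟨ha, hb⟩
  · exact key 0 1 (by decide) ha hb
  · exact key 0 2 (by decide) ha hb
  · exact key 1 2 (by decide) ha hb
end

section
/- Let r ≥ 3 be odd with ⌈r/2⌉ even. Then the complete tripartite graph K_{⌈r/2⌉,⌈r/2⌉,⌈r/2⌉} is (r+1)-regular of even order r + ⌈r/2⌉ + 1, and removing any perfect matching from it yields an r-regular graph of girth 3 and chromatic number 3. -/
/-- The complete tripartite graph with three parts of size `a`. -/
def completeTripartite (a : ℕ) : SimpleGraph (Fin 3 × Fin a) :=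
  SimpleGraph.fromRel (fun p q => p.1 ≠ q.1)

lemma ct_adj {a : ℕ} {p q : Fin 3 × Fin a} :
    (completeTripartite a).Adj p q ↔ p.1 ≠ q.1 := by
  constructor
  · rintro ⟨hne, h | h⟩
    · exact h
    · exact h.symm
  · exact fun h => ⟨fun he => h (by rw [he]), Or.inl h⟩

lemma ct_nbhd {a : ℕ} (v : Fin 3 × Fin a) :
    (completeTripartite a).neighborSet v = {q : Fin 3 × Fin a | q.1 ≠ v.1} := by
  ext q
  rw [SimpleGraph.mem_neighborSet, ct_adj]
  exact ne_comm

lemma ct_ncard {a : ℕ} (v : Fin 3 × Fin a) :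
    ((completeTripartite a).neighborSet v).ncard = 2 * a := by
  rw [ct_nbhd]
  have e : {q : Fin 3 × Fin a | q.1 ≠ v.1} ≃ {j : Fin 3 // j ≠ v.1} × Fin a :=
    { toFun := fun x => (⟨x.1.1, x.2⟩, x.1.2)
      invFun := fun y => ⟨(y.1.1, y.2), y.1.2⟩
      left_inv := fun ⟨⟨_, _⟩, _⟩ => rfl
      right_inv := fun ⟨⟨_, _⟩, _⟩ => rfl }
  rw [← Nat.card_coe_set_eq, Nat.card_congr e]
  simp [Nat.card_eq_fintype_card, Fintype.card_subtype_compl]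

/-- For odd r ≥ 3 with ⌈r/2⌉ even, K_{⌈r/2⌉,⌈r/2⌉,⌈r/2⌉} is (r+1)-regular of
even order r + ⌈r/2⌉ + 1, and removing any perfect matching from it yields an
r-regular graph of girth 3 and chromatic number 3. -/
theorem stmt6 (r : ℕ) (hr : 3 ≤ r) (hodd : Odd r) (he : Even ((r + 1) / 2)) :
    (∀ v, ((completeTripartite ((r + 1) / 2)).neighborSet v).ncard = r + 1) ∧
    Fintype.card (Fin 3 × Fin ((r + 1) / 2)) = r + (r + 1) / 2 + 1 ∧
    Even (r + (r + 1) / 2 + 1) ∧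
    ∀ M : (completeTripartite ((r + 1) / 2)).Subgraph, M.IsPerfectMatching →
      (∀ v, (((completeTripartite ((r + 1) / 2)).deleteEdges
          M.edgeSet).neighborSet v).ncard = r) ∧
      ((completeTripartite ((r + 1) / 2)).deleteEdges M.edgeSet).girth = 3 ∧
      ((completeTripartite ((r + 1) / 2)).deleteEdges
          M.edgeSet).chromaticNumber = 3 := by
  obtain ⟨k, hk⟩ := hodd
  set a : ℕ := (r + 1) / 2 with ha
  have ha2 : 2 ≤ a := by omega
  have har : 2 * a = r + 1 := by omega
  refine ⟨fun v => by rw [ct_ncard]; omega, by simp; omega, ?_, ?_⟩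
  · rw [Nat.even_iff] at he ⊢; omega
  intro M hM
  set H : SimpleGraph (Fin 3 × Fin a) := (completeTripartite a).deleteEdges M.edgeSet with hH
  have hpm := SimpleGraph.Subgraph.isPerfectMatching_iff.mp hM
  -- degree claim
  have hdeg : ∀ v, (H.neighborSet v).ncard = r := by
    intro v
    obtain ⟨w, hw, hwu⟩ := hpm v
    have hset : H.neighborSet v = (completeTripartite a).neighborSet v \ {w} := by
      ext q
      simp only [SimpleGraph.mem_neighborSet, hH, SimpleGraph.deleteEdges_adj,
        SimpleGraph.Subgraph.mem_edgeSet, Set.mem_diff, Set.mem_singleton_iff]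
      constructor
      · rintro ⟨h1, h2⟩
        exact ⟨h1, fun he => h2 (he ▸ hw)⟩
      · rintro ⟨h1, h2⟩
        exact ⟨h1, fun hA => h2 (hwu q hA)⟩
    have hmem : w ∈ (completeTripartite a).neighborSet v := M.adj_sub hw
    rw [hset, Set.ncard_diff_singleton_of_mem hmem, ct_ncard]
    omega
  refine ⟨hdeg, ?_⟩
  -- construct a triangle in H
  set z0 : Fin a := ⟨0, by omega⟩ with hz0
  set z1 : Fin a := ⟨1, by omega⟩ with hz1
  have hz01 : z0 ≠ z1 := Fin.ne_of_val_ne (by simp)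
  set v0 : Fin 3 × Fin a := (0, z0) with hv0
  obtain ⟨w0, hw0, hw0u⟩ := hpm v0
  have hGw0 : (completeTripartite a).Adj v0 w0 := M.adj_sub hw0
  have hp0 : w0.1 ≠ 0 := fun h => (ct_adj.mp hGw0) (h.symm)
  set p : Fin 3 := w0.1 with hp
  set q : Fin 3 := if p = 1 then 2 else 1 with hq
  have hq0 : q ≠ 0 ∧ q ≠ p := by
    have : ∀ x : Fin 3, x ≠ 0 →
        (if x = 1 then (2 : Fin 3) else 1) ≠ 0 ∧ (if x = 1 then (2 : Fin 3) else 1) ≠ x := by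
      decide
    exact this p hp0
  set v1 : Fin 3 × Fin a := (p, if w0.2 = z0 then z1 else z0) with hv1
  have hv1w0 : v1 ≠ w0 := by
    intro h
    have h2 : v1.2 = w0.2 := congrArg Prod.snd h
    by_cases hc : w0.2 = z0 <;> simp [hv1, hc] at h2 <;> [exact hz01 h2.symm; exact hc h2.symm]
  have hG01 : (completeTripartite a).Adj v0 v1 := ct_adj.mpr (by simpa [hv0, hv1] using hp0.symm)
  have hM01 : ¬ M.Adj v0 v1 := fun h => hv1w0 (hw0u v1 h)
  obtain ⟨w1, hw1, hw1u⟩ := hpm v1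
  have hGw1 : (completeTripartite a).Adj v1 w1 := M.adj_sub hw1
  have hpw1 : w1.1 ≠ p := fun h => (ct_adj.mp hGw1) (h.symm)
  set v2 : Fin 3 × Fin a := (q, if w1 = (q, z0) then z1 else z0) with hv2
  have hv2w1 : v2 ≠ w1 := by
    by_cases hc : w1 = (q, z0)
    · intro h
      rw [hc] at h
      have := congrArg Prod.snd h
      simp [hv2, hc] at this
      exact hz01 this.symm
    · intro h
      apply hc
      rw [← h]
      simp [hv2, hc]
  have hG02 : (completeTripartite a).Adj v0 v2 := ct_adj.mpr (by simpa [hv0, hv2] using hq0.1.symm)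
  have hG12 : (completeTripartite a).Adj v1 v2 := ct_adj.mpr (by simpa [hv1, hv2] using hq0.2.symm)
  have hM02 : ¬ M.Adj v0 v2 := by
    intro h
    have := hw0u v2 h
    apply hq0.2
    have := congrArg Prod.fst this
    simpa [hv2] using this
  have hM12 : ¬ M.Adj v1 v2 := fun h => hv2w1 (hw1u v2 h)
  have hH01 : H.Adj v0 v1 := by
    rw [hH, SimpleGraph.deleteEdges_adj]
    exact ⟨hG01, fun h => hM01 (SimpleGraph.Subgraph.mem_edgeSet.mp h)⟩
  have hH02 : H.Adj v0 v2 := by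
    rw [hH, SimpleGraph.deleteEdges_adj]
    exact ⟨hG02, fun h => hM02 (SimpleGraph.Subgraph.mem_edgeSet.mp h)⟩
  have hH12 : H.Adj v1 v2 := by
    rw [hH, SimpleGraph.deleteEdges_adj]
    exact ⟨hG12, fun h => hM12 (SimpleGraph.Subgraph.mem_edgeSet.mp h)⟩
  have hne01 : v0 ≠ v1 := hH01.ne
  have hne02 : v0 ≠ v2 := hH02.ne
  have hne12 : v1 ≠ v2 := hH12.ne
  -- the triangle cycle
  let c : H.Walk v0 v0 :=
    SimpleGraph.Walk.cons hH01 (SimpleGraph.Walk.cons hH12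
      (SimpleGraph.Walk.cons hH02.symm SimpleGraph.Walk.nil))
  have hne10 : v1 ≠ v0 := hne01.symm
  have hne20 : v2 ≠ v0 := hne02.symm
  have hne21 : v2 ≠ v1 := hne12.symm
  have hc : c.IsCycle := by
    rw [SimpleGraph.Walk.cons_isCycle_iff]
    constructor
    · rw [SimpleGraph.Walk.cons_isPath_iff, SimpleGraph.Walk.cons_isPath_iff]
      refine ⟨⟨SimpleGraph.Walk.IsPath.nil, ?_⟩, ?_⟩
      · simp only [SimpleGraph.Walk.support_nil, List.mem_singleton]
        exact hne20
      · simp only [SimpleGraph.Walk.support_cons, SimpleGraph.Walk.support_nil,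
          List.mem_cons, List.mem_singleton, List.not_mem_nil, or_false, not_or]
        exact ⟨hne12, hne10⟩
    · intro hmem
      simp only [SimpleGraph.Walk.edges_cons, SimpleGraph.Walk.edges_nil, List.mem_cons,
        List.not_mem_nil, or_false] at hmem
      rcases hmem with h | h <;> rw [Sym2.eq_iff] at h
      · rcases h with ⟨h1, _⟩ | ⟨h1, _⟩
        exacts [hne01 h1, hne02 h1]
      · rcases h with ⟨h1, _⟩ | ⟨_, h2⟩
        exacts [hne02 h1, hne12 h2]
  have hnacyc : ¬ H.IsAcyclic := fun hA => hA c hc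
  constructor
  · -- girth = 3
    have hlen : c.length = 3 := rfl
    have hle : H.egirth ≤ 3 := by
      have h1 : H.egirth ≤ (c.length : ℕ∞) := by
        rw [SimpleGraph.egirth]
        exact le_trans (iInf_le _ v0) (le_trans (iInf_le _ c) (iInf_le _ hc))
      rwa [hlen] at h1
    have h2 : H.girth ≤ 3 := by
      have := ENat.toNat_le_toNat hle (by simp)
      simpa [SimpleGraph.girth] using this
    have h3 := SimpleGraph.three_le_girth hnacyc
    omega
  · -- chromatic number = 3
    have hcol : H.Colorable 3 := by
      have CG : (completeTripartite a).Coloring (Fin 3) :=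
        SimpleGraph.Coloring.mk (fun v => v.1) (fun h => ct_adj.mp h)
      have : (completeTripartite a).Colorable 3 := by
        simpa using CG.colorable
      exact this.mono_left (SimpleGraph.deleteEdges_le _)
    have hup : H.chromaticNumber ≤ 3 := by
      have := hcol.chromaticNumber_le
      simpa using this
    have hclique : H.IsClique ({v0, v1, v2} : Finset (Fin 3 × Fin a)) := by
      rw [SimpleGraph.isClique_iff]
      intro x hx y hy hxy
      simp only [Finset.coe_insert, Set.mem_insert_iff, Finset.coe_singleton,
        Set.mem_singleton_iff] at hx hy
      rcases hx with rfl | rfl | rfl <;> rcases hy with rfl | rfl | rfl <;>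
        first
          | exact absurd rfl hxy
          | exact hH01 | exact hH01.symm | exact hH02 | exact hH02.symm
          | exact hH12 | exact hH12.symm
    have hcard : ({v0, v1, v2} : Finset (Fin 3 × Fin a)).card = 3 := by
      rw [Finset.card_insert_of_notMem (by simp [hne01, hne02]),
        Finset.card_insert_of_notMem (by simp [hne12]), Finset.card_singleton]
    have hlow := hclique.card_le_chromaticNumber
    rw [hcard] at hlow
    exact le_antisymm hup (by exact_mod_cast hlow)
end

section
/- The Robertson graph (the unique (4,5)-cage, a 4-regular graph of girth 5 on 19 vertices) has chromatic number 3 but admits no equitable 3-coloring: in every proper 3-coloring, the color class sizes are not {7,6,6}. -/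
/-- The edges of the Robertson graph on vertices labelled 1,…,19: a hamiltonian
cycle together with 19 chords. -/
def robertsonEdges : List (ℕ × ℕ) :=
  [(1,2),(2,3),(3,4),(4,5),(5,6),(6,7),(7,8),(8,9),(9,10),(10,11),(11,12),
   (12,13),(13,14),(14,15),(15,16),(16,17),(17,18),(18,19),(19,1),
   (1,5),(1,16),(2,13),(2,9),(3,18),(3,7),(4,15),(4,12),(6,17),(6,13),
   (7,11),(8,19),(8,15),(9,17),(10,5),(10,14),(14,18),(16,11),(19,12)]

/-- The Robertson graph: the unique (4,5)-cage, on 19 vertices. -/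
def robertson : SimpleGraph (Fin 19) :=
  SimpleGraph.fromRel (fun i j => (i.val + 1, j.val + 1) ∈ robertsonEdges)

instance : DecidableRel robertson.Adj := fun i j =>
  decidable_of_iff' _ (SimpleGraph.fromRel_adj _ i j)

/-- Neighbours of vertex `k` (0-based) among vertices `0, …, k-1`. -/
def prevNbrs : ℕ → List ℕ
  | 0 => []
  | 1 => [0]
  | 2 => [1]
  | 3 => [2]
  | 4 => [0, 3]
  | 5 => [4]
  | 6 => [2, 5]
  | 7 => [6]
  | 8 => [1, 7]
  | 9 => [4, 8]
  | 10 => [6, 9]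
  | 11 => [3, 10]
  | 12 => [1, 5, 11]
  | 13 => [9, 12]
  | 14 => [3, 7, 13]
  | 15 => [0, 10, 14]
  | 16 => [5, 8, 15]
  | 17 => [2, 13, 16]
  | 18 => [0, 7, 11, 17]
  | _ => []

/-- Can the partial colouring `l` (colours of vertices `0,…,k-1`) be extended by
giving vertex `k` colour `col`, keeping every colour class of size at most 7? -/
def okExt (l : List ℕ) (k col : ℕ) : Bool :=
  decide (l.count col < 7) && (prevNbrs k).all (fun j => l.getD j 0 != col)

/-- All proper partial colourings of the first `k` vertices with all colour
class sizes at most 7. -/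
def allCols : ℕ → List (List ℕ)
  | 0 => [[]]
  | k+1 => (allCols k).flatMap fun l =>
      ([0, 1, 2].filter fun col => okExt l k col).map fun col => l ++ [col]

lemma prevNbrs_spec : ∀ k, k < 19 → ∀ j ∈ prevNbrs k, j < k ∧
    ((j + 1, k + 1) ∈ robertsonEdges ∨ (k + 1, j + 1) ∈ robertsonEdges) := by
  decide

lemma count_ofFn : ∀ {n : ℕ} (f : Fin n → ℕ) (a : ℕ),
    (List.ofFn f).count a = ∑ i, if f i = a then 1 else 0
  | 0, f, a => by simp
  | n+1, f, a => by
    rw [List.ofFn_succ, List.count_cons, count_ofFn (fun i => f i.succ) a,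
      Fin.sum_univ_succ]
    simp only [beq_iff_eq, @eq_comm ℕ a (f 0)]
    omega

lemma mem_allCols (c : Fin 19 → Fin 3)
    (hadj : ∀ i j, robertson.Adj i j → c i ≠ c j)
    (hcnt : ∀ a : ℕ, (List.ofFn fun v : Fin 19 => (c v).val).count a ≤ 7) :
    ∀ k (hk : k ≤ 19),
      (List.ofFn fun i : Fin k => (c (Fin.castLE hk i)).val) ∈ allCols k := by
  intro k
  induction k with
  | zero => intro _; simp [allCols]
  | succ k ih =>
    intro hk
    have hk' : k ≤ 19 := Nat.le_of_succ_le hk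
    have hkk : k < 19 := hk
    set l : List ℕ := List.ofFn fun i : Fin k => (c (Fin.castLE hk' i)).val with hl
    set col : ℕ := (c ⟨k, hkk⟩).val with hcol
    have hpref : ∀ m (hm : m ≤ 19),
        (List.ofFn fun i : Fin m => (c (Fin.castLE hm i)).val)
          = (List.ofFn fun v : Fin 19 => (c v).val).take m := by
      intro m hm
      exact Fin.ofFn_take_eq_take_ofFn hm (fun v : Fin 19 => (c v).val)
    have hlen : l.length = k := by simp [hl]
    -- the successor-length prefix
    have hsucc : (List.ofFn fun i : Fin (k+1) => (c (Fin.castLE hk i)).val)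
        = l ++ [col] := by
      rw [List.ofFn_succ']
      simp only [List.concat_eq_append]
      congr 1
    rw [hsucc]
    have hcount : l.count col < 7 := by
      have h1 : (l ++ [col]).count col ≤ 7 := by
        have := hpref (k+1) hk
        rw [hsucc] at this
        rw [this]
        exact le_trans ((List.take_sublist _ _).count_le _) (hcnt col)
      have h2 : (l ++ [col]).count col = l.count col + 1 := by
        simp [List.count_append]
      omega
    have hok : okExt l k col = true := by
      rw [okExt, Bool.and_eq_true, List.all_eq_true]
      constructor
      · exact decide_eq_true hcount
      · intro j hj
        obtain ⟨hjk, hrel⟩ := prevNbrs_spec k hkk j hj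
        rw [bne_iff_ne]
        have hget : l.getD j 0 = (c ⟨j, lt_trans hjk hkk⟩).val := by
          rw [List.getD_eq_getElem l 0 (by rw [hlen]; exact hjk)]
          simp [hl]
        rw [hget]
        have hadj' : robertson.Adj ⟨j, lt_trans hjk hkk⟩ ⟨k, hkk⟩ := by
          rw [robertson, SimpleGraph.fromRel_adj]
          exact ⟨by simp [Fin.ext_iff]; omega, hrel⟩
        intro h
        exact hadj _ _ hadj' (Fin.val_injective h)
    show l ++ [col] ∈ allCols (k+1)
    rw [allCols, List.mem_flatMap]
    refine ⟨l, ih hk', ?_⟩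
    rw [List.mem_map]
    refine ⟨col, ?_, rfl⟩
    rw [List.mem_filter]
    constructor
    · have := (c ⟨k, hkk⟩).isLt
      simp only [hcol]
      interval_cases h : (c ⟨k, hkk⟩).val <;> simp
    · exact hok

lemma allCols_final : (allCols 19).all
    (fun l => decide (l.count 0 ≤ 5) || decide (l.count 1 ≤ 5) ||
      decide (l.count 2 ≤ 5)) = true := by decide

lemma fin2_cycle5 : ∀ a b x d e : Fin 2,
    a ≠ b → b ≠ x → x ≠ d → d ≠ e → a ≠ e → False := by
  intro a b x d e h1 h2 h3 h4 h5
  rw [Ne, Fin.ext_iff] at h1 h2 h3 h4 h5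
  have := a.isLt; have := b.isLt; have := x.isLt; have := d.isLt
  have := e.isLt
  omega

/-- An explicit proper 3-colouring. -/
def goodCol : Fin 19 → Fin 3 :=
  ![0, 1, 2, 0, 2, 1, 0, 1, 0, 1, 2, 1, 2, 0, 2, 1, 2, 1, 2]

lemma goodCol_valid : ∀ i j, robertson.Adj i j → goodCol i ≠ goodCol j := by
  decide

/-- The Robertson graph has chromatic number 3 but admits no equitable
3-coloring (on 19 vertices, no proper 3-coloring has class sizes {7,6,6}). -/
theorem stmt14 : robertson.chromaticNumber = 3 ∧
    ¬ ∃ c : robertson.Coloring (Fin 3), ∀ i j : Fin 3,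
      Fintype.card {v // c v = i} ≤ Fintype.card {v // c v = j} + 1 := by
  constructor
  · -- chromatic number
    have h3 : robertson.Colorable 3 := ⟨SimpleGraph.Coloring.mk goodCol (fun {i j} h => goodCol_valid i j h)⟩
    have h2 : ¬ robertson.Colorable 2 := by
      rintro ⟨c⟩
      have key := fin2_cycle5
      exact key (c 0) (c 1) (c 2) (c 3) (c 4)
        (c.valid (by decide)) (c.valid (by decide)) (c.valid (by decide))
        (c.valid (by decide)) (c.valid (by decide))
    refine le_antisymm ?_ ?_
    · have := h3.chromaticNumber_le
      simpa using this
    · by_contra h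
      push_neg at h
      have hle : robertson.chromaticNumber ≤ 2 := by
        have h' : robertson.chromaticNumber < 3 := h
        rw [show (3 : ℕ∞) = 2 + 1 by norm_num] at h'
        exact (ENat.lt_add_one_iff (by norm_num)).mp h' 
      rw [show (2 : ℕ∞) = ((2 : ℕ) : ℕ∞) by norm_num,
        SimpleGraph.chromaticNumber_le_iff_colorable] at hle
      exact h2 hle
  · -- no equitable 3-coloring
    rintro ⟨c, hc⟩
    set L : List ℕ := List.ofFn fun v : Fin 19 => (c v).val with hL
    have hcard : ∀ i : Fin 3, Fintype.card {v // c v = i} = L.count i.val := by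
      intro i
      rw [Fintype.card_subtype, Finset.card_filter, hL, count_ofFn]
      apply Finset.sum_congr rfl
      intro v _
      congr 1
      simp [Fin.ext_iff]
    have hsum : L.count 0 + L.count 1 + L.count 2 = 19 := by
      have h0 := hcard 0; have h1 := hcard 1; have h2 := hcard 2
      have : ∑ i : Fin 3, Fintype.card {v // c v = i} = 19 := by
        have : ∀ i : Fin 3, Fintype.card {v // c v = i}
            = ∑ v : Fin 19, if c v = i then 1 else 0 := by
          intro i
          rw [Fintype.card_subtype, Finset.card_filter]
        rw [Finset.sum_congr rfl (fun i _ => this i), Finset.sum_comm]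
        have : ∀ v : Fin 19, (∑ i : Fin 3, if c v = i then 1 else 0) = 1 := by
          intro v
          rw [Finset.sum_ite_eq]
          simp
        rw [Finset.sum_congr rfl (fun v _ => this v)]
        simp
      rw [Fin.sum_univ_three] at this
      rw [h0, h1, h2] at this
      exact this
    have hbound : ∀ i j : Fin 3, L.count i.val ≤ L.count j.val + 1 := by
      intro i j
      rw [← hcard i, ← hcard j]
      exact hc i j
    have h01 := hbound 0 1; have h10 := hbound 1 0
    have h02 := hbound 0 2; have h20 := hbound 2 0
    have h12 := hbound 1 2; have h21 := hbound 2 1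
    simp only [Fin.val_zero, Fin.val_one, Fin.val_two] at h01 h10 h02 h20 h12 h21
    have hge : L.count 0 ≥ 6 ∧ L.count 1 ≥ 6 ∧ L.count 2 ≥ 6 := by omega
    have hcnt : ∀ a : ℕ, L.count a ≤ 7 := by
      intro a
      match a, lt_or_ge a 3 with
      | a, Or.inl h =>
        interval_cases a
        · omega
        · omega
        · omega
      | a, Or.inr h =>
        have : a ∉ L := by
          rw [hL]
          intro hmem
          rw [List.mem_ofFn] at hmem
          obtain ⟨v, hv⟩ := hmem
          have hv' : ((c v : Fin 3) : ℕ) = a := hv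
          have := (c v).isLt
          omega
        rw [List.count_eq_zero_of_not_mem this]
        omega
    have hmem : L ∈ allCols 19 := by
      have := mem_allCols c (fun i j h => c.valid h) (by rw [← hL]; exact hcnt) 19 le_rfl
      convert this using 2
      rfl
    have hfin := List.all_eq_true.mp allCols_final L hmem
    have hfin' : L.count 0 ≤ 5 ∨ L.count 1 ≤ 5 ∨ L.count 2 ≤ 5 := by
      have h1 := Bool.or_eq_true _ _ |>.mp hfin
      rcases h1 with h1 | h1
      · have h2 := Bool.or_eq_true _ _ |>.mp h1
        rcases h2 with h2 | h2
        · exact Or.inl (of_decide_eq_true h2)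
        · exact Or.inr (Or.inl (of_decide_eq_true h2))
      · exact Or.inr (Or.inr (of_decide_eq_true h1))
    rcases hfin' with h | h | h <;> omega
end

section
/- Let G be a bipartite r-regular graph (r ≥ 4 even) of girth g+1 with g odd, let x be a vertex lying on a (g+1)-cycle with neighbors x_1,...,x_r ordered so that x_1, x, x_2 lie on a common (g+1)-cycle. Then the graph H' obtained from G − x by adding the edges x_i x_{i+1} for each odd i is r-regular with girth g and chromatic number 3. -/
/-- The graph obtained from `G` by deleting the vertex `x` and adding the
edges `e 0 – e 1`, `e 2 – e 3`, …, i.e. `e i – e j` for indices `i ≠ j` with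
`⌊i/2⌋ = ⌊j/2⌋`, where `e` enumerates the neighbors of `x`. -/
def modifiedGraph {V : Type*} (G : SimpleGraph V) (x : V) {r : ℕ}
    (e : Fin r → V) : SimpleGraph {v : V // v ≠ x} :=
  SimpleGraph.fromRel (fun a b =>
    G.Adj a b ∨ ∃ i j : Fin r, (a : V) = e i ∧ (b : V) = e j ∧
      i.val / 2 = j.val / 2 ∧ i ≠ j)

namespace Stmt17Aux

open SimpleGraph

def partner {r : ℕ} (hre : Even r) (i : Fin r) : Fin r :=
  ⟨if i.val % 2 = 0 then i.val + 1 else i.val - 1, by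
    obtain ⟨k, hk⟩ := hre; have := i.isLt
    rcases Nat.even_or_odd i.val with ⟨m, hm⟩ | ⟨m, hm⟩ <;> split <;> omega⟩

lemma partner_ne {r : ℕ} (hre : Even r) (i : Fin r) : partner hre i ≠ i := by
  refine Fin.ne_of_val_ne ?_
  simp only [partner]
  split <;> omega

lemma partner_div {r : ℕ} (hre : Even r) (i : Fin r) :
    (partner hre i).val / 2 = i.val / 2 := by
  simp only [partner]
  rcases Nat.even_or_odd i.val with ⟨m, hm⟩ | ⟨m, hm⟩ <;> split <;> omega

lemma partner_unique {r : ℕ} (hre : Even r) {i j : Fin r}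
    (hdiv : j.val / 2 = i.val / 2) (hne : j ≠ i) : j = partner hre i := by
  have : j.val ≠ i.val := fun h => hne (Fin.ext h)
  refine Fin.ext ?_
  simp only [partner]
  split <;> omega

lemma partner_partner {r : ℕ} (hre : Even r) (i : Fin r) :
    partner hre (partner hre i) = i := by
  refine (partner_unique hre (partner_div hre i).symm ?_).symm
  exact fun h => partner_ne hre i h.symm

lemma partner_parity {r : ℕ} (hre : Even r) (i : Fin r) :
    (partner hre i).val % 2 ≠ i.val % 2 := by
  simp only [partner]
  split <;> omega

variable {V : Type*} {G : SimpleGraph V} {x : V} {r : ℕ} {e : Fin r → V}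

/-- "new" adjacency -/
def NewE (x : V) (e : Fin r → V) (a b : {v : V // v ≠ x}) : Prop :=
  ∃ i j : Fin r, (a : V) = e i ∧ (b : V) = e j ∧ i.val / 2 = j.val / 2 ∧ i ≠ j

lemma newE_symm {a b : {v : V // v ≠ x}} (h : NewE x e a b) : NewE x e b a := by
  obtain ⟨i, j, h1, h2, h3, h4⟩ := h
  exact ⟨j, i, h2, h1, h3.symm, h4.symm⟩

lemma newE_elim (hre : Even r) (hinj : Function.Injective e)
    {a b : {v : V // v ≠ x}} (h : NewE x e a b) :
    ∃ i, (a : V) = e i ∧ (b : V) = e (partner hre i) := by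
  obtain ⟨i, j, h1, h2, h3, h4⟩ := h
  exact ⟨i, h1, by rw [← partner_unique hre h3.symm h4.symm]; exact h2⟩

lemma adj_iff (hinj : Function.Injective e) {a b : {v : V // v ≠ x}} :
    (modifiedGraph G x e).Adj a b ↔ G.Adj a b ∨ NewE x e a b := by
  rw [modifiedGraph, fromRel_adj]
  constructor
  · rintro ⟨hne, (h | h) | (h | h)⟩
    · exact Or.inl h
    · exact Or.inr h
    · exact Or.inl h.symm
    · exact Or.inr (newE_symm h)
  · rintro (h | h)
    · exact ⟨fun hh => G.loopless.irrefl _ (hh ▸ h), Or.inl (Or.inl h)⟩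
    · refine ⟨?_, Or.inl (Or.inr h)⟩
      obtain ⟨i, j, h1, h2, h3, h4⟩ := h
      intro hh
      exact h4 (hinj (h1 ▸ h2 ▸ congrArg Subtype.val hh))

end Stmt17Aux

namespace Stmt17Aux

open SimpleGraph SimpleGraph.Walk

variable {V : Type*} {G : SimpleGraph V} {x : V} {r : ℕ} {e : Fin r → V}

/-- all darts of a walk in the modified graph are G-edges -/
def AllG (G : SimpleGraph V) {x : V} {e : Fin r → V} {u v : {y : V // y ≠ x}}
    (p : (modifiedGraph G x e).Walk u v) : Prop :=
  ∀ d ∈ p.darts, G.Adj d.toProd.1.val d.toProd.2.val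

lemma lift1 {u v : {y : V // y ≠ x}} (p : (modifiedGraph G x e).Walk u v) (h : AllG G p) :
    ∃ q : G.Walk u.val v.val, q.length = p.length ∧ q.support = p.support.map Subtype.val ∧
      q.edges = p.edges.map (Sym2.map Subtype.val) := by
  induction p with
  | nil => exact ⟨.nil, rfl, rfl, rfl⟩
  | @cons a b c h' q ih =>
    have hadj : G.Adj a.val b.val := h ⟨(a, b), h'⟩ (by simp [darts_cons])
    obtain ⟨q', h1, h2, h3⟩ := ih (fun d hd => h d (by simp [darts_cons, hd]))
    exact ⟨Walk.cons hadj q', by simp [h1], by simp [h2], by simp [h3]⟩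

lemma lift2 (hinj : Function.Injective e) {c d : V} (q : G.Walk c d)
    (hsup : ∀ y ∈ q.support, y ≠ x) :
    ∃ p : (modifiedGraph G x e).Walk ⟨c, hsup c q.start_mem_support⟩ ⟨d, hsup d q.end_mem_support⟩,
      p.length = q.length ∧ p.support.map Subtype.val = q.support ∧
      p.edges.map (Sym2.map Subtype.val) = q.edges := by
  induction q with
  | nil => exact ⟨.nil, rfl, rfl, rfl⟩
  | @cons a b c h' q ih =>
    have hb : ∀ y ∈ q.support, y ≠ x := fun y hy => hsup y (by simp [hy])
    obtain ⟨p', h1, h2, h3⟩ := ih hb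
    have hadj : (modifiedGraph G x e).Adj ⟨a, hsup a (Walk.cons h' q).start_mem_support⟩
        ⟨b, hb b q.start_mem_support⟩ := (adj_iff hinj).mpr (Or.inl h')
    exact ⟨Walk.cons hadj p', by simp [h1], by simp [h2], by simp [h3]⟩

lemma split (hinj : Function.Injective e) {u v : {y : V // y ≠ x}}
    (p : (modifiedGraph G x e).Walk u v) (hne : ¬ AllG G p) :
    ∃ (c d : {y : V // y ≠ x}) (q : (modifiedGraph G x e).Walk u c)
      (h : (modifiedGraph G x e).Adj c d) (q₂ : (modifiedGraph G x e).Walk d v),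
      AllG G q ∧ NewE x e c d ∧ p = q.append (Walk.cons h q₂) := by
  induction p with
  | nil => exact absurd (fun d hd => by simp [darts_nil] at hd) hne
  | @cons a b c h' q ih =>
    by_cases hG : G.Adj a.val b.val
    · have hq : ¬ AllG G q := by
        intro hq
        refine hne (fun d hd => ?_)
        rw [darts_cons, List.mem_cons] at hd
        rcases hd with hd | hd
        · subst hd; exact hG
        · exact hq d hd
      obtain ⟨cc, dd, q1, hcd, q₂, ha1, ha2, ha3⟩ := ih hq
      refine ⟨cc, dd, Walk.cons h' q1, hcd, q₂, ?_, ha2, by rw [cons_append, ha3]⟩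
      intro d hd
      rw [darts_cons, List.mem_cons] at hd
      rcases hd with hd | hd
      · subst hd; exact hG
      · exact ha1 d hd
    · have hnew : NewE x e a b := by
        rcases (adj_iff hinj).mp h' with hh | hh
        · exact absurd hh hG
        · exact hh
      exact ⟨a, b, Walk.nil, h', q, fun d hd => by simp [darts_nil] at hd, hnew,
        by rw [nil_append]⟩

end Stmt17Aux

namespace Stmt17Aux

open SimpleGraph SimpleGraph.Walk

variable {V : Type*} {G : SimpleGraph V} {x : V} {r : ℕ} {e : Fin r → V}

lemma seg {g : ℕ} (hbound : ∀ (a : V) (w : G.Walk a a), w.IsCycle → g + 1 ≤ w.length)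
    {c d : V} (q : G.Walk c d) (hq : q.IsPath) (hx : x ∉ q.support) (hcd : c ≠ d)
    (h1 : G.Adj x c) (h2 : G.Adj x d) : g - 1 ≤ q.length := by
  have hxc : x ≠ c := fun h => hx (h ▸ q.start_mem_support)
  have hxd : x ≠ d := fun h => hx (h ▸ q.end_mem_support)
  have hq' : (q.concat h2.symm).IsPath := by
    refine IsPath.mk' ?_
    rw [support_concat, List.nodup_append]
    exact ⟨hq.support_nodup, List.nodup_singleton x,
      fun a ha b hb hab => by rw [List.mem_singleton.mp hb] at hab; exact hx (hab ▸ ha)⟩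
  have hxe : s(x, c) ∉ (q.concat h2.symm).edges := by
    rw [edges_concat, List.concat_eq_append]
    intro hmem
    rcases List.mem_append.mp hmem with hmem | hmem
    · exact hx (q.fst_mem_support_of_mem_edges hmem)
    · have heq2 : s(x, c) = s(d, x) := List.mem_singleton.mp hmem
      rw [Sym2.eq_iff] at heq2
      rcases heq2 with ⟨h1, h2⟩ | ⟨h1, h2⟩
      · exact hxd h1
      · exact hcd h2
  have hcyc : (Walk.cons h1 (q.concat h2.symm)).IsCycle :=
    (cons_isCycle_iff _ h1).mpr ⟨hq', hxe⟩
  have := hbound x _ hcyc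
  rw [length_cons, length_concat] at this
  omega

lemma key (hinj : Function.Injective e) (hre : Even r) {g : ℕ}
    (hbound : ∀ (a : V) (w : G.Walk a a), w.IsCycle → g + 1 ≤ w.length)
    (hxadj : ∀ i, G.Adj x (e i))
    {u v : {y : V // y ≠ x}} (W : (modifiedGraph G x e).Walk u v) (hW : W.IsPath)
    (j : Fin r) (hu : (u : V) = e j) (hv : (v : V) = e (partner hre j))
    (hex : s(u, v) ∉ W.edges) : g - 1 ≤ W.length := by
  by_cases hall : AllG G W
  · obtain ⟨q, hl, hs, _⟩ := lift1 W hall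
    have hqpath : q.IsPath := IsPath.mk' (by
      rw [hs]; exact hW.support_nodup.map Subtype.val_injective)
    have hqx : x ∉ q.support := by
      rw [hs]
      intro hmem
      obtain ⟨a, _, ha⟩ := List.mem_map.mp hmem
      exact a.2 ha
    have hne : (u : V) ≠ (v : V) := by
      rw [hu, hv]
      exact fun h => partner_ne hre j (hinj h).symm
    have := seg hbound q hqpath hqx hne (hu ▸ hxadj j) (hv ▸ hxadj (partner hre j))
    omega
  · obtain ⟨c, d, q, hcd, q₂, hallq, hnew, heq⟩ := split hinj W hall
    obtain ⟨i, hc, hd⟩ := newE_elim hre hinj hnew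
    by_cases h0 : q.length = 0
    · exfalso
      have huc : u = c := eq_of_length_eq_zero h0
      have hui : (u : V) = e i := by rw [huc]; exact hc
      have hij : i = j := hinj (hui.symm.trans hu)
      have hdv : d = v := Subtype.ext (by rw [hd, hv, hij])
      apply hex
      have hsy : s(u, v) = s(c, d) := by rw [huc, ← hdv]
      rw [heq, edges_append, edges_cons, hsy]
      exact List.mem_append.mpr (Or.inr (List.mem_cons_self))
    · have hqpath : q.IsPath := IsPath.of_append_left (heq ▸ hW)
      obtain ⟨qq, hl, hs, _⟩ := lift1 q hallq
      have hqqpath : qq.IsPath := IsPath.mk' (by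
        rw [hs]; exact hqpath.support_nodup.map Subtype.val_injective)
      have hqqx : x ∉ qq.support := by
        rw [hs]
        intro hmem
        obtain ⟨a, _, ha⟩ := List.mem_map.mp hmem
        exact a.2 ha
      have hne : (u : V) ≠ (c : V) := by
        intro hh
        have hueq : u = c := Subtype.ext hh
        subst hueq
        exact h0 (by rw [isPath_iff_eq_nil.mp hqpath]; rfl)
      have := seg hbound qq hqqpath hqqx hne (hu ▸ hxadj j) (hc ▸ hxadj i)
      have hlen : W.length = q.length + (q₂.length + 1) := by
        rw [heq, length_append, length_cons]
      omega



lemma lower (hinj : Function.Injective e) (hre : Even r) {g : ℕ} (hg3 : 3 ≤ g)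
    (hbound : ∀ (a : V) (w : G.Walk a a), w.IsCycle → g + 1 ≤ w.length)
    (hxadj : ∀ i, G.Adj x (e i))
    {a : {y : V // y ≠ x}} (p : (modifiedGraph G x e).Walk a a) (hp : p.IsCycle) :
    g ≤ p.length := by
  by_cases hall : AllG G p
  · obtain ⟨q, hl, hs, he⟩ := lift1 p hall
    have h3 : 3 ≤ p.length := hp.three_le_length
    have hq : q.IsCycle := by
      refine ⟨⟨⟨?_⟩, ?_⟩, ?_⟩
      · rw [he]
        exact (hp.isCircuit.isTrail.edges_nodup).map
          (Sym2.map.injective Subtype.val_injective)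
      · intro hnil
        rw [hnil] at hl
        simp only [length_nil] at hl
        omega
      · have : q.support.tail = List.map Subtype.val p.support.tail := by
          rw [hs, support_eq_cons p]; simp
        rw [this]
        exact hp.support_nodup.map Subtype.val_injective
    have := hbound _ q hq
    omega
  · obtain ⟨c, d, q, hcd, q₂, hallq, hnew, heq⟩ := split hinj p hall
    obtain ⟨i, hc, hd⟩ := newE_elim hre hinj hnew
    have hWsup : (q₂.append q).support = q₂.support ++ q.support.tail := support_append _ _
    have hpsup : p.support.tail = q.support.tail ++ q₂.support := by
      rw [heq, support_append]
      have h1 : (Walk.cons hcd q₂).support.tail = q₂.support := by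
        simp [support_cons]
      rw [h1, support_eq_cons q, List.cons_append]
      simp
    have hWnodup : (q₂.append q).support.Nodup := by
      rw [hWsup]
      refine (List.perm_append_comm).nodup ?_
      rw [← hpsup]
      exact hp.support_nodup
    have hWpath : (q₂.append q).IsPath := IsPath.mk' hWnodup
    have hednd := hp.isCircuit.isTrail.edges_nodup
    rw [heq, edges_append, edges_cons] at hednd
    have hexcl : s(d, c) ∉ (q₂.append q).edges := by
      rw [edges_append]
      rw [Sym2.eq_swap]
      intro hmem
      rcases List.mem_append.mp hmem with hmem | hmem
      · have : s(c, d) ∉ q₂.edges := by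
          have := List.Nodup.of_append_right hednd
          exact (List.nodup_cons.mp this).1
        exact this hmem
      · have : s(c, d) ∉ q.edges := by
          have hdisj := List.disjoint_of_nodup_append hednd
          exact fun hq' => hdisj hq' (List.mem_cons_self)
        exact this hmem
    have hkey := key hinj hre hbound hxadj (q₂.append q) hWpath (partner hre i)
      hd (by rw [hc, partner_partner]) hexcl
    have hlen : p.length = q.length + (q₂.length + 1) := by
      rw [heq, length_append, length_cons]
    have hlen2 : (q₂.append q).length = q₂.length + q.length := length_append _ _
    omega



lemma gcycle (hinj : Function.Injective e) {g : ℕ} (hg3 : 3 ≤ g)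
    (hnoadj : ∀ i j, ¬ G.Adj (e i) (e j))
    (i0 i1 : Fin r) (hv0 : i0.val = 0) (hv1 : i1.val = 1)
    (w : G.Walk x x) (hwc : w.IsCycle) (hwl : w.length = g + 1)
    (h1 : w.getVert 1 = e i0) (hgv : w.getVert g = e i1)
    (hnex : ∀ i, e i ≠ x) :
    ∃ (a : {y : V // y ≠ x}) (C : (modifiedGraph G x e).Walk a a),
      C.IsCycle ∧ C.length = g := by
  have hwnil : ¬ w.Nil := by rw [not_nil_iff_lt_length]; omega
  have htlen : w.tail.length = g := by
    have := length_tail_add_one hwnil; omega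
  have htsup : w.tail.support = w.support.tail := support_tail_of_not_nil w hwnil
  have htpath : w.tail.IsPath := IsPath.mk' (htsup ▸ hwc.support_nodup)
  have hrtlen : w.tail.reverse.length = g := by rw [length_reverse, htlen]
  have hrtnil : ¬ w.tail.reverse.Nil := by rw [not_nil_iff_lt_length]; omega
  have hrtpath : w.tail.reverse.IsPath := htpath.reverse
  set q := w.tail.reverse.tail with hqdef
  have hqlen : q.length = g - 1 := by
    have h5 := length_tail_add_one hrtnil
    rw [← hqdef] at h5; omega
  have hqpath : q.IsPath := hrtpath.tail
  have hqsup : q.support = w.tail.reverse.support.tail :=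
    support_tail_of_not_nil _ hrtnil
  have hxq : x ∉ q.support := by
    rw [hqsup]
    have hnd := hrtpath.support_nodup
    rw [support_eq_cons w.tail.reverse] at hnd
    exact (List.nodup_cons.mp hnd).1
  have hstart : w.tail.reverse.getVert 1 = e i1 := by
    rw [getVert_reverse, htlen]
    have h2 : w.tail.getVert (g - 1) = w.getVert g := by
      rw [getVert_tail w]; congr 1; omega
    rw [h2, hgv]
  have hend : w.getVert 1 = e i0 := h1
  set q' := q.copy hstart hend with hq'def
  have hq'path : q'.IsPath := by rw [hq'def, isPath_copy]; exact hqpath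
  have hq'sup : ∀ y ∈ q'.support, y ≠ x := by
    rw [hq'def, support_copy]
    exact fun y hy h => hxq (h ▸ hy)
  obtain ⟨P, hPlen, hPsup, hPed⟩ := lift2 hinj q' hq'sup
  have hadj : (modifiedGraph G x e).Adj ⟨e i0, hq'sup _ q'.end_mem_support⟩
      ⟨e i1, hq'sup _ q'.start_mem_support⟩ := by
    refine (adj_iff hinj).mpr (Or.inr ⟨i0, i1, rfl, rfl, ?_, ?_⟩)
    · omega
    · exact fun h => by rw [h] at hv0; omega
  refine ⟨_, Walk.cons hadj P, ?_, ?_⟩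
  · refine (cons_isCycle_iff P hadj).mpr ⟨?_, ?_⟩
    · refine IsPath.mk' ?_
      have : (P.support.map Subtype.val).Nodup := by
        rw [hPsup]; exact hq'path.support_nodup
      exact this.of_map
    · intro hmem
      have hmm := List.mem_map_of_mem (f := Sym2.map Subtype.val) hmem
      rw [hPed] at hmm
      simp only [Sym2.map_pair_eq] at hmm
      exact hnoadj i0 i1 (q'.adj_of_mem_edges hmm)
  · rw [length_cons, hPlen, hq'def, length_copy, hqlen]
    omega


lemma colorable3 (hinj : Function.Injective e) (hre : Even r)
    (hnoadj : ∀ i j, ¬ G.Adj (e i) (e j)) (hbip : G.Colorable 2) :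
    (modifiedGraph G x e).Colorable 3 := by
  classical
  obtain ⟨C⟩ := hbip
  refine ⟨SimpleGraph.Coloring.mk
    (fun v => if ∃ i : Fin r, Odd i.val ∧ (v : V) = e i then (2 : Fin 3)
      else Fin.castLE (by omega) (C v.val)) ?_⟩
  intro a b hab
  by_cases ha : ∃ i : Fin r, Odd i.val ∧ (a : V) = e i
  · by_cases hb : ∃ i : Fin r, Odd i.val ∧ (b : V) = e i
    · exfalso
      obtain ⟨i, hoi, hi⟩ := ha
      obtain ⟨j, hoj, hj⟩ := hb
      rcases (adj_iff hinj).mp hab with hG | hnew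
      · exact hnoadj i j (by rw [← hi, ← hj]; exact hG)
      · obtain ⟨i₀, hai, hbi⟩ := newE_elim hre hinj hnew
        have hii : i = i₀ := hinj (hi.symm.trans hai)
        have hjj : j = partner hre i₀ := hinj (hj.symm.trans hbi)
        have hpar := partner_parity hre i₀
        rw [Nat.odd_iff] at hoi hoj
        rw [hii] at hoi
        rw [hjj] at hoj
        omega
    · simp only [if_pos ha, if_neg hb]
      intro h
      have hv : ((2 : Fin 3)).val = (Fin.castLE (show (2:ℕ) ≤ 3 by omega) (C b.val)).val :=
        congrArg Fin.val h
      have h2' : ((2 : Fin 3)).val = 2 := rfl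
      have h3' : (Fin.castLE (by omega : 2 ≤ 3) (C b.val)).val = (C b.val).val := rfl
      have := (C b.val).isLt
      omega
  · by_cases hb : ∃ i : Fin r, Odd i.val ∧ (b : V) = e i
    · simp only [if_neg ha, if_pos hb]
      intro h
      have hv : (Fin.castLE (show (2:ℕ) ≤ 3 by omega) (C a.val)).val = ((2 : Fin 3)).val :=
        congrArg Fin.val h
      have h2' : ((2 : Fin 3)).val = 2 := rfl
      have h3' : (Fin.castLE (by omega : 2 ≤ 3) (C a.val)).val = (C a.val).val := rfl
      have := (C a.val).isLt
      omega
    · have hC : C a.val ≠ C b.val := by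
        rcases (adj_iff hinj).mp hab with hG | hnew
        · exact C.valid hG
        · exfalso
          obtain ⟨i₀, hai, hbi⟩ := newE_elim hre hinj hnew
          have hpar := partner_parity hre i₀
          rcases Nat.even_or_odd i₀.val with hev | hod
          · refine hb ⟨partner hre i₀, ?_, hbi⟩
            rw [Nat.even_iff] at hev
            rw [Nat.odd_iff]
            omega
          · exact ha ⟨i₀, hod, hai⟩
      simp only [if_neg ha, if_neg hb]
      intro h
      exact hC (Fin.castLE_injective _ h)


lemma ncard_neighborSet [Fintype V] [DecidableRel G.Adj] (hreg : G.IsRegularOfDegree r)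
    (v : V) : (G.neighborSet v).ncard = r := by
  rw [Set.ncard_eq_toFinset_card', ← SimpleGraph.neighborFinset_def]
  exact hreg v

lemma regular [Fintype V] [DecidableRel G.Adj] (hinj : Function.Injective e) (hre : Even r)
    (hxadj : ∀ i, G.Adj x (e i)) (hrange : Set.range e = G.neighborSet x)
    (hnoadj : ∀ i j, ¬ G.Adj (e i) (e j)) (hreg : G.IsRegularOfDegree r) (hr1 : 1 ≤ r)
    (v : {y : V // y ≠ x}) : ((modifiedGraph G x e).neighborSet v).ncard = r := by
  have himg : ((modifiedGraph G x e).neighborSet v).ncard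
      = (Subtype.val '' ((modifiedGraph G x e).neighborSet v)).ncard :=
    (Set.ncard_image_of_injective _ Subtype.val_injective).symm
  rw [himg]
  by_cases hv : (v : V) ∈ Set.range e
  · obtain ⟨i, hi⟩ := hv
    have hmemx : x ∈ G.neighborSet (v : V) := by
      rw [SimpleGraph.mem_neighborSet, ← hi]
      exact (hxadj i).symm
    have himg2 : Subtype.val '' ((modifiedGraph G x e).neighborSet v)
        = (G.neighborSet (v : V) \ {x}) ∪ {e (partner hre i)} := by
      ext y
      constructor
      · rintro ⟨w, hw, rfl⟩
        rcases (adj_iff hinj).mp hw with hG | hnew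
        · exact Or.inl ⟨hG, w.2⟩
        · obtain ⟨i₀, ha, hb⟩ := newE_elim hre hinj hnew
          have hii : i₀ = i := hinj (ha.symm.trans hi.symm)
          right
          rw [Set.mem_singleton_iff, hb, hii]
      · rintro (⟨hadj, hne⟩ | hy)
        · exact ⟨⟨y, fun h => hne (by rw [h]; rfl)⟩,
            (adj_iff hinj).mpr (Or.inl hadj), rfl⟩
        · rw [Set.mem_singleton_iff] at hy
          have hynex : y ≠ x := by
            rw [hy]
            exact fun h => G.loopless.irrefl x (h ▸ hxadj (partner hre i))
          refine ⟨⟨y, hynex⟩, (adj_iff hinj).mpr (Or.inr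
            ⟨i, partner hre i, hi.symm, hy, (partner_div hre i).symm, (partner_ne hre i).symm⟩),
            rfl⟩
      
    rw [himg2]
    have hdisj : Disjoint (G.neighborSet (v : V) \ {x}) ({e (partner hre i)} : Set V) := by
      rw [Set.disjoint_singleton_right]
      intro hmem
      have : G.Adj (e i) (e (partner hre i)) := by
        rw [hi]
        exact hmem.1
      exact hnoadj _ _ this
    rw [Set.ncard_union_eq hdisj (Set.toFinite _) (Set.toFinite _),
      Set.ncard_diff_singleton_of_mem hmemx,
      ncard_neighborSet hreg, Set.ncard_singleton]
    omega
  · have himg2 : Subtype.val '' ((modifiedGraph G x e).neighborSet v)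
        = G.neighborSet (v : V) := by
      ext y
      constructor
      · rintro ⟨w, hw, rfl⟩
        rcases (adj_iff hinj).mp hw with hG | hnew
        · exact hG
        · exfalso
          obtain ⟨i₀, ha, _⟩ := newE_elim hre hinj hnew
          exact hv ⟨i₀, ha.symm⟩
      · intro hadj
        have hyne : y ≠ x := by
          intro h
          apply hv
          rw [hrange, SimpleGraph.mem_neighborSet]
          exact (h ▸ hadj).symm
        exact ⟨⟨y, hyne⟩, (adj_iff hinj).mpr (Or.inl hadj), rfl⟩
    rw [himg2, ncard_neighborSet hreg]

end Stmt17Aux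

open SimpleGraph SimpleGraph.Walk Stmt17Aux

/-- Let G be a bipartite r-regular graph (r ≥ 4 even) of girth g+1, g odd, and
let x lie on a (g+1)-cycle whose neighbors on the cycle are e 0 and e 1, where
e enumerates the neighborhood of x. Then the graph obtained from G − x by
joining e 0–e 1, e 2–e 3, … is r-regular with girth g and chromatic number 3. -/
theorem stmt17 {V : Type*} [Fintype V] (G : SimpleGraph V) [DecidableRel G.Adj]
    (r g : ℕ) (hr : 4 ≤ r) (hre : Even r) (hg : Odd g)
    (hbip : G.Colorable 2)
    (hreg : G.IsRegularOfDegree r)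
    (hgirth : G.girth = g + 1)
    (x : V) (e : Fin r → V) (hinj : Function.Injective e)
    (hrange : Set.range e = G.neighborSet x)
    (hcyc : ∃ w : G.Walk x x, w.IsCycle ∧ w.length = g + 1 ∧
      w.getVert 1 = e ⟨0, by omega⟩ ∧ w.getVert g = e ⟨1, by omega⟩) :
    (∀ v, ((modifiedGraph G x e).neighborSet v).ncard = r) ∧
    (modifiedGraph G x e).girth = g ∧
    (modifiedGraph G x e).chromaticNumber = 3 := by
  obtain ⟨w, hwc, hwl, h1, hgv⟩ := hcyc
  have hxadj : ∀ i, G.Adj x (e i) := by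
    intro i
    have hm : e i ∈ Set.range e := ⟨i, rfl⟩
    rw [hrange] at hm
    exact hm
  have hnex : ∀ i, e i ≠ x := fun i h => G.loopless.irrefl x (h ▸ hxadj i)
  have hnacyc : ¬ G.IsAcyclic := fun h => h w hwc
  have hne : G.egirth ≠ ⊤ := fun h => hnacyc (SimpleGraph.egirth_eq_top.mp h)
  have hegirth : G.egirth = ((g + 1 : ℕ) : ℕ∞) := by
    conv_lhs => rw [← ENat.coe_toNat hne]
    exact_mod_cast hgirth
  have hbound : ∀ (a : V) (w' : G.Walk a a), w'.IsCycle → g + 1 ≤ w'.length := by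
    intro a w' hw'
    have h2 : G.egirth ≤ (w'.length : ℕ∞) := by
      rw [SimpleGraph.egirth]
      exact iInf_le_of_le a (iInf_le_of_le w' (iInf_le_of_le hw' le_rfl))
    rw [hegirth] at h2
    exact_mod_cast h2
  have hg3 : 3 ≤ g := by
    have h3 := SimpleGraph.three_le_girth hnacyc
    rw [hgirth] at h3
    obtain ⟨k, hk⟩ := hg
    omega
  have hnoadj : ∀ i j, ¬ G.Adj (e i) (e j) := by
    intro i j hadj
    have hene : e i ≠ e j := hadj.ne
    have hP : (Walk.cons hadj (Walk.cons (hxadj j).symm Walk.nil) : G.Walk (e i) x).IsPath := by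
      rw [isPath_def]
      simp [hene, hnex i, hnex j]
    have hEx : s(x, e i) ∉
        (Walk.cons hadj (Walk.cons (hxadj j).symm Walk.nil) : G.Walk (e i) x).edges := by
      simp only [edges_cons, edges_nil, List.mem_cons, List.not_mem_nil, or_false]
      rintro (h | h) <;> rw [Sym2.eq_iff] at h
      · rcases h with ⟨ha, hb⟩ | ⟨ha, hb⟩
        · exact hnex i ha.symm
        · exact hnex j ha.symm
      · rcases h with ⟨ha, hb⟩ | ⟨ha, hb⟩
        · exact hnex j ha.symm
        · exact hene hb
    have hcyc3 : (Walk.cons (hxadj i)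
        (Walk.cons hadj (Walk.cons (hxadj j).symm Walk.nil))).IsCycle :=
      (cons_isCycle_iff _ (hxadj i)).mpr ⟨hP, hEx⟩
    have hb3 := hbound x _ hcyc3
    simp only [length_cons, length_nil] at hb3
    omega
  obtain ⟨a₀, C, hCc, hCl⟩ := gcycle hinj hg3 hnoadj ⟨0, by omega⟩ ⟨1, by omega⟩ rfl rfl
    w hwc hwl h1 hgv hnex
  refine ⟨fun v => regular hinj hre hxadj hrange hnoadj hreg (by omega) v, ?_, ?_⟩
  · have hub : (modifiedGraph G x e).egirth ≤ (g : ℕ∞) := by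
      have hle : (modifiedGraph G x e).egirth ≤ (C.length : ℕ∞) := by
        rw [SimpleGraph.egirth]
        exact iInf_le_of_le a₀ (iInf_le_of_le C (iInf_le_of_le hCc le_rfl))
      rw [hCl] at hle
      exact hle
    have hlb : (g : ℕ∞) ≤ (modifiedGraph G x e).egirth :=
      SimpleGraph.le_egirth.mpr (fun a ww hww => by
        exact_mod_cast lower hinj hre hg3 hbound hxadj ww hww)
    have hegH : (modifiedGraph G x e).egirth = (g : ℕ∞) := le_antisymm hub hlb
    rw [SimpleGraph.girth, hegH, ENat.toNat_coe]
  · have hle3 : (modifiedGraph G x e).chromaticNumber ≤ 3 := by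
      have hc3 := (colorable3 (x := x) hinj hre hnoadj hbip).chromaticNumber_le
      exact_mod_cast hc3
    have hge3 : 3 ≤ (modifiedGraph G x e).chromaticNumber :=
      SimpleGraph.Walk.three_le_chromaticNumber_of_odd_loop C (by rw [hCl]; exact hg)
    exact le_antisymm hle3 hge3
end
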